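/- arXiv:2206.13068 — 3 statements merged into one kernel-verified Lean document; each statement's English description precedes it below -/
import Mathlib

section
/- For n = 2 and the all-ones 2×2 matrix A with δ > 0, the bound z(t) ≤ U₁(δ,t) z(0) + U₂(δ,t) K holds under the hypothesis z'(t) ≤ δ A z(t) + K componentwise with z nonnegative, where U₁(δ,t) = I + ½(e^{2δt} − 1)A and U₂(δ,t) = t(I − ½A) + ((e^{2δt} − 1)/(4δ)) A. -/
open Matrix

/-- For n = 2 and the all-ones 2×2 matrix A with δ > 0:
    z(t) ≤ U₁(δ,t) z(0) + U₂(δ,t) K componentwise, where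
    U₁(δ,t) = I + ½(e^{2δt} − 1)A and U₂(δ,t) = t(I − ½A) + ((e^{2δt} − 1)/(4δ))A. -/
theorem two_dim_gronwall_bound (T δ : ℝ) (hT : 0 < T) (hδ : 0 < δ)
    (A : Matrix (Fin 2) (Fin 2) ℝ) (hA : ∀ i j, A i j = 1)
    (K : Fin 2 → ℝ) (z z' : ℝ → Fin 2 → ℝ)
    (hderiv : ∀ t ∈ Set.Icc (0:ℝ) T, HasDerivAt z (z' t) t)
    (hznonneg : ∀ t ∈ Set.Icc (0:ℝ) T, ∀ i, 0 ≤ z t i)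
    (hz' : ∀ t ∈ Set.Icc (0:ℝ) T, ∀ i, z' t i ≤ (δ • (A *ᵥ z t)) i + K i) :
    ∀ t ∈ Set.Icc (0:ℝ) T, ∀ i,
      z t i ≤ (((1 : Matrix (Fin 2) (Fin 2) ℝ)
                  + ((Real.exp (2 * δ * t) - 1) / 2) • A) *ᵥ z 0) i
        + ((t • ((1 : Matrix (Fin 2) (Fin 2) ℝ) - (1/2 : ℝ) • A)
              + ((Real.exp (2 * δ * t) - 1) / (4 * δ)) • A) *ᵥ K) i := by
  have h0T : (0:ℝ) ∈ Set.Icc (0:ℝ) T := ⟨le_refl 0, hT.le⟩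
  -- component derivatives
  have hcomp : ∀ i, ∀ τ ∈ Set.Icc (0:ℝ) T, HasDerivAt (fun u => z u i) (z' τ i) τ := by
    intro i τ hτ
    exact (ContinuousLinearMap.proj (R := ℝ) (φ := fun _ : Fin 2 => ℝ) i).hasFDerivAt.comp_hasDerivAt
      τ (hderiv τ hτ)
  have hmulvec : ∀ v : Fin 2 → ℝ, ∀ j, (A *ᵥ v) j = v 0 + v 1 := by
    intro v j
    simp [Matrix.mulVec, dotProduct, Fin.sum_univ_two, hA]
  set Ksum : ℝ := K 0 + K 1 with hKs
  set s : ℝ → ℝ := fun τ => z τ 0 + z τ 1 with hs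
  have hsderiv : ∀ τ ∈ Set.Icc (0:ℝ) T, HasDerivAt s (z' τ 0 + z' τ 1) τ := by
    intro τ hτ
    exact (hcomp 0 τ hτ).add (hcomp 1 τ hτ)
  have hs' : ∀ τ ∈ Set.Icc (0:ℝ) T, z' τ 0 + z' τ 1 ≤ 2 * δ * s τ + Ksum := by
    intro τ hτ
    have h0 := hz' τ hτ 0
    have h1 := hz' τ hτ 1
    simp only [Pi.smul_apply, smul_eq_mul, hmulvec] at h0 h1
    simp only [hs, hKs]
    nlinarith
  -- Gronwall for s via antitone ψ
  set ψ : ℝ → ℝ := fun τ => Real.exp (-(2 * δ) * τ) * (s τ + Ksum / (2 * δ)) with hψ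
  have hψderiv : ∀ τ ∈ Set.Icc (0:ℝ) T, HasDerivAt ψ
      (Real.exp (-(2 * δ) * τ) * (-(2 * δ)) * (s τ + Ksum / (2 * δ))
        + Real.exp (-(2 * δ) * τ) * (z' τ 0 + z' τ 1)) τ := by
    intro τ hτ
    have he : HasDerivAt (fun u => Real.exp (-(2 * δ) * u)) (Real.exp (-(2 * δ) * τ) * (-(2 * δ))) τ := by
      simpa [mul_comm] using ((hasDerivAt_id τ).const_mul (-(2 * δ))).exp
    exact he.mul ((hsderiv τ hτ).add_const (Ksum / (2 * δ)))
  have hψanti : AntitoneOn ψ (Set.Icc 0 T) := by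
    apply antitoneOn_of_hasDerivWithinAt_nonpos (convex_Icc 0 T)
      (f' := fun τ => Real.exp (-(2 * δ) * τ) * (-(2 * δ)) * (s τ + Ksum / (2 * δ))
        + Real.exp (-(2 * δ) * τ) * (z' τ 0 + z' τ 1))
    · intro τ hτ
      exact ((hψderiv τ hτ).continuousAt).continuousWithinAt
    · intro τ hτ
      rw [interior_Icc] at hτ
      exact ((hψderiv τ (Set.Ioo_subset_Icc_self hτ)).hasDerivWithinAt)
    · intro τ hτ
      rw [interior_Icc] at hτ
      have hb := hs' τ (Set.Ioo_subset_Icc_self hτ)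
      have hepos : 0 < Real.exp (-(2 * δ) * τ) := Real.exp_pos _
      have : Real.exp (-(2 * δ) * τ) * (-(2 * δ)) * (s τ + Ksum / (2 * δ))
          + Real.exp (-(2 * δ) * τ) * (z' τ 0 + z' τ 1)
          = Real.exp (-(2 * δ) * τ) * ((z' τ 0 + z' τ 1) - (2 * δ * s τ + Ksum)) := by
        field_simp
        ring
      rw [this]
      exact mul_nonpos_of_nonneg_of_nonpos hepos.le (by linarith)
  have hsbound : ∀ τ ∈ Set.Icc (0:ℝ) T,
      s τ ≤ Real.exp (2 * δ * τ) * s 0 + (Real.exp (2 * δ * τ) - 1) / (2 * δ) * Ksum := by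
    intro τ hτ
    have h := hψanti h0T hτ hτ.1
    simp only [hψ, mul_zero, Real.exp_zero, one_mul] at h
    have hepos : 0 < Real.exp (-(2 * δ) * τ) := Real.exp_pos _
    have hinv : Real.exp (-(2 * δ) * τ) * Real.exp (2 * δ * τ) = 1 := by
      rw [← Real.exp_add]; ring_nf; exact Real.exp_zero
    -- multiply h by exp(2δτ)
    have h2 : Real.exp (2 * δ * τ) * (Real.exp (-(2 * δ) * τ) * (s τ + Ksum / (2 * δ)))
        ≤ Real.exp (2 * δ * τ) * (s 0 + Ksum / (2 * δ)) :=
      mul_le_mul_of_nonneg_left h (Real.exp_pos _).le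
    have h3 : Real.exp (2 * δ * τ) * (Real.exp (-(2 * δ) * τ) * (s τ + Ksum / (2 * δ)))
        = s τ + Ksum / (2 * δ) := by
      rw [← mul_assoc, mul_comm (Real.exp (2 * δ * τ)), hinv, one_mul]
    rw [h3] at h2
    have e1 : Real.exp (2 * δ * τ) * (s 0 + Ksum / (2 * δ))
        = Real.exp (2 * δ * τ) * s 0 + Real.exp (2 * δ * τ) * (Ksum / (2 * δ)) := by ring
    have e2 : (Real.exp (2 * δ * τ) - 1) / (2 * δ) * Ksum
        = Real.exp (2 * δ * τ) * (Ksum / (2 * δ)) - Ksum / (2 * δ) := by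
      field_simp
    linarith [h2]
  -- Step B: per-component bound
  intro t ht i
  set c : ℝ := (Real.exp (2 * δ * t) - 1) / 2 with hc
  set d : ℝ := (Real.exp (2 * δ * t) - 1) / (4 * δ) with hd
  set H : ℝ → ℝ := fun τ => (Real.exp (2 * δ * τ) - 1) / 2 * s 0 + τ * K i
    + ((Real.exp (2 * δ * τ) - 1) / (4 * δ) - τ / 2) * Ksum with hH
  set φ : ℝ → ℝ := fun τ => z 0 i + H τ - z τ i with hφ
  have hHderiv : ∀ τ : ℝ, HasDerivAt H
      (δ * Real.exp (2 * δ * τ) * s 0 + K i + (Real.exp (2 * δ * τ) / 2 - 1 / 2) * Ksum) τ := by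
    intro τ
    have he : HasDerivAt (fun u => Real.exp (2 * δ * u)) (Real.exp (2 * δ * τ) * (2 * δ)) τ := by
      simpa [mul_comm] using ((hasDerivAt_id τ).const_mul (2 * δ)).exp
    have h1 : HasDerivAt (fun u => (Real.exp (2 * δ * u) - 1) / 2 * s 0)
        (Real.exp (2 * δ * τ) * (2 * δ) / 2 * s 0) τ := by
      exact (((he.sub_const 1).div_const 2).mul_const (s 0))
    have h2 : HasDerivAt (fun u : ℝ => u * K i) (K i) τ := by
      simpa using (hasDerivAt_id τ).mul_const (K i)
    have h3 : HasDerivAt (fun u => ((Real.exp (2 * δ * u) - 1) / (4 * δ) - u / 2) * Ksum)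
        ((Real.exp (2 * δ * τ) * (2 * δ) / (4 * δ) - 1 / 2) * Ksum) τ := by
      exact ((((he.sub_const 1).div_const (4 * δ)).sub ((hasDerivAt_id τ).div_const 2)).mul_const Ksum)
    have := (h1.add h2).add h3
    convert this using 1
    case e'_4 => rfl
    case e'_5 => rfl
    case e'_8 => rfl
    have : (2:ℝ) * δ ≠ 0 := by positivity
    field_simp
    ring
  have hφmono : MonotoneOn φ (Set.Icc 0 T) := by
    apply monotoneOn_of_hasDerivWithinAt_nonneg (convex_Icc 0 T)
      (f' := fun τ => δ * Real.exp (2 * δ * τ) * s 0 + K i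
        + (Real.exp (2 * δ * τ) / 2 - 1 / 2) * Ksum - z' τ i)
    · intro τ hτ
      exact (((hHderiv τ).const_add (z 0 i)).sub (hcomp i τ hτ)).continuousAt.continuousWithinAt
    · intro τ hτ
      rw [interior_Icc] at hτ
      exact (((hHderiv τ).const_add (z 0 i)).sub
        (hcomp i τ (Set.Ioo_subset_Icc_self hτ))).hasDerivWithinAt
    · intro τ hτ
      rw [interior_Icc] at hτ
      have hτ' := Set.Ioo_subset_Icc_self hτ
      have hzb := hz' τ hτ' i
      simp only [Pi.smul_apply, smul_eq_mul, hmulvec] at hzb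
      have hsb := hsbound τ hτ'
      have hmul : δ * s τ ≤ δ * (Real.exp (2 * δ * τ) * s 0
          + (Real.exp (2 * δ * τ) - 1) / (2 * δ) * Ksum) :=
        mul_le_mul_of_nonneg_left hsb hδ.le
      have hmul2 : δ * s τ ≤ δ * Real.exp (2 * δ * τ) * s 0
          + (Real.exp (2 * δ * τ) / 2 - 1 / 2) * Ksum := by
        calc δ * s τ ≤ δ * (Real.exp (2 * δ * τ) * s 0
            + (Real.exp (2 * δ * τ) - 1) / (2 * δ) * Ksum) := hmul
          _ = δ * Real.exp (2 * δ * τ) * s 0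
              + (Real.exp (2 * δ * τ) / 2 - 1 / 2) * Ksum := by
            field_simp
      have hzs : δ * (z τ 0 + z τ 1) = δ * s τ := by simp [hs]
      linarith [hzb, hmul2]
  have hkey : z t i ≤ z 0 i + H t := by
    have h := hφmono h0T ht ht.1
    have hH0 : H 0 = 0 := by simp [hH]
    simp only [hφ, hH0, add_zero] at h
    linarith
  -- Finish: show RHS equals z 0 i + H t
  have hrhs : (((1 : Matrix (Fin 2) (Fin 2) ℝ) + c • A) *ᵥ z 0) i
      + ((t • ((1 : Matrix (Fin 2) (Fin 2) ℝ) - (1/2 : ℝ) • A) + d • A) *ᵥ K) i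
      = z 0 i + H t := by
    simp only [hH, hc, hd, hKs, hs]
    fin_cases i <;>
      simp [Matrix.mulVec, dotProduct, Fin.sum_univ_two, hA, Matrix.one_apply,
        Matrix.add_apply, Matrix.sub_apply, Matrix.smul_apply] <;> ring
  rw [← hc, ← hd] at *
  calc z t i ≤ z 0 i + H t := hkey
    _ = _ := hrhs.symm
end

section
/- Oscillatory integral order estimate: if ρ ∈ C^{n+1}([0,1]) with ρ^{(i)}(0) = ρ^{(i)}(1) = 0 for i = 1,…,n and ρ(0) = 0, ρ(1) = 1, then for ε > 0, k ∈ ℤ with |kε − 1| ≥ c₀ > 0, the integral ∫_0^T e^{(−i/ε + ik)t} ρ(t/T) dt equals (ε/(i(kε−1))) e^{(−i/ε + ik)T} plus a remainder bounded in modulus by C ε^{n+1}, where C depends only on ρ, T, c₀, n. -/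
open Complex

lemma ibp_step (T : ℝ) (μ : ℂ) (hμ : μ ≠ 0)
    (g g' : ℝ → ℝ) (hg : ∀ t, HasDerivAt g (g' t) t) (hg' : Continuous g') :
    (∫ t in (0:ℝ)..T, Complex.exp (μ * t) * (g t : ℂ))
      = (Complex.exp (μ * T) * g T - g 0) / μ
        - (1/μ) * ∫ t in (0:ℝ)..T, Complex.exp (μ * t) * (g' t : ℂ) := by
  have hv : ∀ t : ℝ, HasDerivAt (fun s : ℝ => Complex.exp (μ * s) / μ)
      (Complex.exp (μ * t)) t := by
    intro t
    have h0 : HasDerivAt (fun s : ℝ => (s : ℂ)) 1 t := by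
      simpa using (hasDerivAt_id t).ofReal_comp
    have h1 : HasDerivAt (fun s : ℝ => μ * (s : ℂ)) μ t := by
      simpa using h0.const_mul μ
    have h2 := (h1.cexp).div_const μ
    simpa [mul_div_assoc, mul_div_cancel_right₀ _ hμ] using h2
  have hu : ∀ t : ℝ, HasDerivAt (fun s : ℝ => ((g s : ℂ))) ((g' t : ℂ)) t :=
    fun t => (hg t).ofReal_comp
  have hu' : IntervalIntegrable (fun t : ℝ => (g' t : ℂ)) MeasureTheory.volume 0 T :=
    (Complex.continuous_ofReal.comp hg').intervalIntegrable 0 T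
  have hv' : IntervalIntegrable (fun t : ℝ => Complex.exp (μ * t)) MeasureTheory.volume 0 T :=
    (Complex.continuous_exp.comp (continuous_const.mul Complex.continuous_ofReal)).intervalIntegrable 0 T
  have H := intervalIntegral.integral_mul_deriv_eq_deriv_mul
    (u := fun s : ℝ => ((g s : ℂ))) (v := fun s : ℝ => Complex.exp (μ * s) / μ)
    (u' := fun t : ℝ => (g' t : ℂ)) (v' := fun t : ℝ => Complex.exp (μ * t))
    (fun t _ => hu t) (fun t _ => hv t) hu' hv'
  have h3 : (∫ t in (0:ℝ)..T, (g t : ℂ) * Complex.exp (μ * t))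
      = ∫ t in (0:ℝ)..T, Complex.exp (μ * t) * (g t : ℂ) := by
    simp [mul_comm]
  have h4 : (∫ t in (0:ℝ)..T, (g' t : ℂ) * (Complex.exp (μ * t) / μ))
      = (1/μ) * ∫ t in (0:ℝ)..T, Complex.exp (μ * t) * (g' t : ℂ) := by
    rw [← intervalIntegral.integral_const_mul]
    congr 1; ext t; ring
  rw [h3, h4] at H
  rw [H]
  field_simp
  simp

/-- Oscillatory integral order estimate: under the algebraic order condition of
    order n, the ramped oscillatory integral equals (ε/(i(kε−1))) e^{(−i/ε+ik)T}
    plus a remainder of size O(ε^{n+1}), uniformly over ε > 0 and k ∈ ℤ with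
    |kε − 1| ≥ c₀. -/
theorem oscillatory_integral_order_estimate
    (T c₀ : ℝ) (n : ℕ) (hT : 0 < T) (hc₀ : 0 < c₀)
    (ρ : ℝ → ℝ) (hρ : ContDiff ℝ (n + 1) ρ)
    (hord : ∀ i : ℕ, 1 ≤ i → i ≤ n →
      iteratedDeriv i ρ 0 = 0 ∧ iteratedDeriv i ρ 1 = 0)
    (hρ0 : ρ 0 = 0) (hρ1 : ρ 1 = 1) :
    ∃ C > 0, ∀ ε : ℝ, 0 < ε → ∀ k : ℤ, c₀ ≤ |(k : ℝ) * ε - 1| →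
      ‖(∫ t in (0:ℝ)..T,
            Complex.exp ((-Complex.I / ε + Complex.I * k) * t) * (ρ (t / T) : ℂ))
          - (ε : ℂ) / (Complex.I * ((k : ℂ) * ε - 1))
              * Complex.exp ((-Complex.I / ε + Complex.I * k) * T)‖
        ≤ C * ε ^ (n + 1) := by
  obtain ⟨M, hM⟩ : ∃ M, ∀ x ∈ Set.Icc (0:ℝ) 1, |iteratedDeriv (n+1) ρ x| ≤ M := by
    obtain ⟨M, hM⟩ := (isCompact_Icc (a := (0:ℝ)) (b := 1)).exists_bound_of_continuousOn
      ((hρ.continuous_iteratedDeriv (n+1) (by exact_mod_cast le_refl _)).continuousOn)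
    exact ⟨M, fun x hx => hM x hx⟩
  have hM0 : 0 ≤ M := le_trans (abs_nonneg _) (hM 0 ⟨le_refl _, zero_le_one⟩)
  refine ⟨(M + 1) * T / (c₀ * T) ^ (n + 1), by positivity, ?_⟩
  intro ε hε k hk
  set μ : ℂ := -Complex.I / ε + Complex.I * k with hμdef
  set r : ℝ := ((k : ℝ) * ε - 1) / ε with hrdef
  have hεC : (ε : ℂ) ≠ 0 := Complex.ofReal_ne_zero.2 hε.ne'
  have hkε : ((k : ℝ) * ε - 1) ≠ 0 := by
    intro h; rw [h] at hk; simp at hk; linarith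
  have hμr : μ = Complex.I * (r : ℝ) := by
    rw [hμdef, hrdef]; push_cast; field_simp; ring
  have hr0 : r ≠ 0 := div_ne_zero hkε hε.ne'
  have hμ0 : μ ≠ 0 := by
    rw [hμr]; exact mul_ne_zero Complex.I_ne_zero (Complex.ofReal_ne_zero.2 hr0)
  have hμnorm : ‖μ‖ = |r| := by
    rw [hμr]; simp [map_mul]
  have hmain : (ε : ℂ) / (Complex.I * ((k : ℂ) * ε - 1)) = 1 / μ := by
    have hc : ((k : ℂ) * ε - 1) = (((k : ℝ) * ε - 1 : ℝ) : ℂ) := by push_cast; ring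
    have hrC : (r : ℂ) = (((k : ℝ) * ε - 1 : ℝ) : ℂ) / ε := by
      rw [hrdef]; push_cast; ring
    rw [hμr, hc, hrC]
    have hkC : ((((k : ℝ) * ε - 1 : ℝ)) : ℂ) ≠ 0 := Complex.ofReal_ne_zero.2 hkε
    field_simp
  have hnorm1 : ∀ t : ℝ, ‖Complex.exp (μ * t)‖ = 1 := by
    intro t
    rw [hμr]
    have h5 : Complex.I * (r : ℂ) * (t : ℂ) = ((r * t : ℝ) : ℂ) * Complex.I := by
      push_cast; ring
    rw [h5]
    simpa using Complex.norm_exp_ofReal_mul_I (r * t)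
  clear_value μ r
  have hder : ∀ m : ℕ, m ≤ n → ∀ t : ℝ,
      HasDerivAt (fun s : ℝ => iteratedDeriv m ρ (s / T))
        (iteratedDeriv (m+1) ρ (t / T) * (1/T)) t := by
    intro m hm t
    have h1 : HasDerivAt (iteratedDeriv m ρ) (iteratedDeriv (m+1) ρ (t/T)) (t/T) := by
      rw [iteratedDeriv_succ]
      exact ((hρ.differentiable_iteratedDeriv m
        (by exact_mod_cast Nat.lt_succ_of_le hm)) (t/T)).hasDerivAt
    have h2 : HasDerivAt (fun s : ℝ => s / T) (1/T) t := by
      simpa using (hasDerivAt_id t).div_const T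
    exact h1.comp t h2
  have hTC : (T : ℂ) ≠ 0 := Complex.ofReal_ne_zero.2 hT.ne'
  have key : ∀ m : ℕ, 1 ≤ m → m ≤ n + 1 →
      (∫ t in (0:ℝ)..T, Complex.exp (μ * t) * (ρ (t / T) : ℂ))
        - Complex.exp (μ * T) / μ
      = (-(1/(μ * T)))^m
          * ∫ t in (0:ℝ)..T, Complex.exp (μ * t) * ((iteratedDeriv m ρ (t / T) : ℝ) : ℂ) := by
    intro m hm1 hm2
    induction m with
    | zero => omega
    | succ m ih =>
      rcases Nat.eq_zero_or_pos m with hm0 | hmpos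
      · subst hm0
        have H := ibp_step T μ hμ0 (fun s => ρ (s / T))
          (fun t => iteratedDeriv 1 ρ (t / T) * (1/T))
          (by simpa using hder 0 (Nat.zero_le n))
          (((hρ.continuous_iteratedDeriv 1 (by exact_mod_cast Nat.le_add_left 1 n)).comp
            (continuous_id.div_const T)).mul continuous_const)
        simp only [div_self hT.ne', zero_div, hρ1, hρ0] at H
        have hpull : (∫ t in (0:ℝ)..T, Complex.exp (μ * t)
            * ((iteratedDeriv 1 ρ (t / T) * (1/T) : ℝ) : ℂ))
          = (1/(T:ℂ)) * ∫ t in (0:ℝ)..T, Complex.exp (μ * t)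
              * ((iteratedDeriv 1 ρ (t / T) : ℝ) : ℂ) := by
          rw [← intervalIntegral.integral_const_mul]
          congr 1; ext t; push_cast; ring
        rw [hpull] at H
        rw [H]
        push_cast
        field_simp
        ring
      · have hmn : m ≤ n := by omega
        have IH := ih hmpos (by omega)
        have hbd0 : iteratedDeriv m ρ 0 = 0 := (hord m hmpos hmn).1
        have hbd1 : iteratedDeriv m ρ 1 = 0 := (hord m hmpos hmn).2
        have H := ibp_step T μ hμ0 (fun s => iteratedDeriv m ρ (s / T))
          (fun t => iteratedDeriv (m+1) ρ (t / T) * (1/T))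
          (hder m hmn)
          (((hρ.continuous_iteratedDeriv (m+1) (by exact_mod_cast by omega)).comp
            (continuous_id.div_const T)).mul continuous_const)
        simp only [div_self hT.ne', zero_div, hbd1, hbd0] at H
        have hpull : (∫ t in (0:ℝ)..T, Complex.exp (μ * t)
            * ((iteratedDeriv (m+1) ρ (t / T) * (1/T) : ℝ) : ℂ))
          = (1/(T:ℂ)) * ∫ t in (0:ℝ)..T, Complex.exp (μ * t)
              * ((iteratedDeriv (m+1) ρ (t / T) : ℝ) : ℂ) := by
          rw [← intervalIntegral.integral_const_mul]
          congr 1; ext t; push_cast; ring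
        rw [hpull] at H
        rw [IH, H, pow_succ]
        push_cast
        field_simp
        ring
  have key' := key (n+1) (by omega) (le_refl _)
  have hint : ‖∫ t in (0:ℝ)..T, Complex.exp (μ * t)
      * ((iteratedDeriv (n+1) ρ (t / T) : ℝ) : ℂ)‖ ≤ M * T := by
    have hb : ∀ t ∈ Set.uIoc (0:ℝ) T, ‖Complex.exp (μ * t)
        * ((iteratedDeriv (n+1) ρ (t / T) : ℝ) : ℂ)‖ ≤ M := by
      intro t ht
      rw [Set.uIoc_of_le hT.le] at ht
      have htT : t / T ∈ Set.Icc (0:ℝ) 1 :=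
        ⟨div_nonneg ht.1.le hT.le, (div_le_one hT).2 ht.2⟩
      rw [norm_mul, hnorm1, one_mul, Complex.norm_real, Real.norm_eq_abs]
      exact hM _ htT
    have := intervalIntegral.norm_integral_le_of_norm_le_const hb
    simpa [abs_of_pos hT] using this
  rw [hmain]
  have heq : (∫ t in (0:ℝ)..T, Complex.exp (μ * t) * (ρ (t / T) : ℂ))
      - 1 / μ * Complex.exp (μ * T)
      = (-(1/(μ * T)))^(n+1)
          * ∫ t in (0:ℝ)..T, Complex.exp (μ * t) * ((iteratedDeriv (n+1) ρ (t / T) : ℝ) : ℂ) := by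
    rw [← key']; ring
  rw [heq]
  rw [norm_mul, norm_pow, norm_neg, norm_div, norm_one, norm_mul, hμnorm,
    Complex.norm_real, Real.norm_eq_abs, abs_of_pos hT]
  have hrpos : 0 < |r| := abs_pos.2 hr0
  have hrabs : |r| = |(k : ℝ) * ε - 1| / ε := by
    rw [hrdef, abs_div, abs_of_pos hε]
  have h1 : 1 / (|r| * T) ≤ ε / (c₀ * T) := by
    rw [div_le_div_iff₀ (by positivity) (by positivity)]
    have h2 : ε * |r| = |(k : ℝ) * ε - 1| := by
      rw [hrabs]; field_simp
    nlinarith [hT, hk, hε]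
  calc (1 / (|r| * T)) ^ (n+1) * ‖∫ t in (0:ℝ)..T, Complex.exp (μ * t)
        * ((iteratedDeriv (n+1) ρ (t / T) : ℝ) : ℂ)‖
      ≤ (ε / (c₀ * T)) ^ (n+1) * (M * T) := by
        apply mul_le_mul _ hint (norm_nonneg _) (by positivity)
        exact pow_le_pow_left₀ (by positivity) h1 _
    _ = M * T * ε ^ (n+1) / (c₀ * T) ^ (n+1) := by
        rw [div_pow]; ring
    _ ≤ (M + 1) * T / (c₀ * T) ^ (n+1) * ε ^ (n+1) := by
        rw [div_mul_eq_mul_div]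
        gcongr
        nlinarith [pow_nonneg hε.le (n+1)]
end

section
/- Two-component contraction across a nudging cycle: suppose nonnegative functions u, v : [0,T] → ℝ (representing ∥q⁺−q⁻∥ and ∥w⁺−w⁻∥) are differentiable with u(0) = 0, and satisfy u' ≤ δ(u + v) and v' ≤ δ(u + v) + κ for constants δ, κ > 0. Then u(T) ≤ ½(e^{2δT} − 1) v(0) + κ (e^{2δT} − 2δT − 1)/(4δ). -/
/-- If `f'` is a derivative of `f` on `[0,T]` and `f' ≤ 0` there, then `f t ≤ f 0`. -/
lemma aux_antitone {T : ℝ} (hT : 0 < T) (f f' : ℝ → ℝ)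
    (hf : ∀ t ∈ Set.Icc (0:ℝ) T, HasDerivAt f (f' t) t)
    (hf' : ∀ t ∈ Set.Icc (0:ℝ) T, f' t ≤ 0) :
    ∀ t ∈ Set.Icc (0:ℝ) T, f t ≤ f 0 := by
  have hmono : AntitoneOn f (Set.Icc (0:ℝ) T) := by
    apply antitoneOn_of_deriv_nonpos (convex_Icc 0 T)
    · exact fun t ht => (hf t ht).continuousAt.continuousWithinAt
    · intro t ht
      rw [interior_Icc] at ht
      exact (hf t (Set.Ioo_subset_Icc_self ht)).differentiableAt.differentiableWithinAt
    · intro t ht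
      rw [interior_Icc] at ht
      rw [(hf t (Set.Ioo_subset_Icc_self ht)).deriv]
      exact hf' t (Set.Ioo_subset_Icc_self ht)
  intro t ht
  exact hmono (Set.left_mem_Icc.2 hT.le) ht ht.1

/-- Two-component contraction across a nudging cycle: if u, v ≥ 0 on [0,T] are
    differentiable with u(0) = 0, u' ≤ δ(u+v) and v' ≤ δ(u+v) + κ, then
    u(T) ≤ ½(e^{2δT} − 1) v(0) + κ (e^{2δT} − 2δT − 1)/(4δ). -/
theorem two_component_contraction (T δ κ : ℝ) (hT : 0 < T) (hδ : 0 < δ) (hκ : 0 < κ)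
    (u v u' v' : ℝ → ℝ)
    (hu : ∀ t ∈ Set.Icc (0:ℝ) T, HasDerivAt u (u' t) t)
    (hv : ∀ t ∈ Set.Icc (0:ℝ) T, HasDerivAt v (v' t) t)
    (hupos : ∀ t ∈ Set.Icc (0:ℝ) T, 0 ≤ u t)
    (hvpos : ∀ t ∈ Set.Icc (0:ℝ) T, 0 ≤ v t)
    (hu0 : u 0 = 0)
    (hu' : ∀ t ∈ Set.Icc (0:ℝ) T, u' t ≤ δ * (u t + v t))
    (hv' : ∀ t ∈ Set.Icc (0:ℝ) T, v' t ≤ δ * (u t + v t) + κ) :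
    u T ≤ (Real.exp (2 * δ * T) - 1) / 2 * v 0
      + κ * (Real.exp (2 * δ * T) - 2 * δ * T - 1) / (4 * δ) := by
  set c : ℝ := κ / (2 * δ) with hc
  have hc2 : 2 * δ * c = κ := by rw [hc]; field_simp
  -- Step 1: Gronwall bound on s = u + v
  -- φ t = (u t + v t + c) * exp(-(2δ) t) is nonincreasing
  have step1 : ∀ t ∈ Set.Icc (0:ℝ) T,
      u t + v t + c ≤ (v 0 + c) * Real.exp (2 * δ * t) := by
    have key := aux_antitone hT
      (fun t => (u t + v t + c) * Real.exp (-(2 * δ) * t))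
      (fun t => (u' t + v' t) * Real.exp (-(2 * δ) * t)
        + (u t + v t + c) * (Real.exp (-(2 * δ) * t) * (-(2 * δ))))
      (by
        intro t ht
        have hD : HasDerivAt (fun t => Real.exp (-(2 * δ) * t))
            (Real.exp (-(2 * δ) * t) * (-(2 * δ))) t := by
          have := ((hasDerivAt_id t).const_mul (-(2 * δ))).exp
          simpa [mul_comm] using this
        exact (((hu t ht).add (hv t ht)).add_const c).mul hD)
      (by
        intro t ht
        have he : 0 < Real.exp (-(2 * δ) * t) := Real.exp_pos _
        have h1 := hu' t ht
        have h2 := hv' t ht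
        have h3 := hupos t ht
        have h4 := hvpos t ht
        show (u' t + v' t) * Real.exp (-(2 * δ) * t)
          + (u t + v t + c) * (Real.exp (-(2 * δ) * t) * (-(2 * δ))) ≤ 0
        nlinarith [mul_pos he hδ])
    intro t ht
    have h := key t ht
    simp only [mul_zero, neg_zero, Real.exp_zero, mul_one, hu0, zero_add] at h
    have hnn : (u t + v t + c) * Real.exp (-(2 * δ) * t) ≤ v 0 + c := by
      simpa using h
    have he : 0 < Real.exp (-(2 * δ) * t) := Real.exp_pos _
    have hinv : Real.exp (-(2 * δ) * t) * Real.exp (2 * δ * t) = 1 := by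
      rw [← Real.exp_add]; ring_nf; exact Real.exp_zero
    calc u t + v t + c
        = (u t + v t + c) * (Real.exp (-(2 * δ) * t) * Real.exp (2 * δ * t)) := by
          rw [hinv, mul_one]
      _ = ((u t + v t + c) * Real.exp (-(2 * δ) * t)) * Real.exp (2 * δ * t) := by ring
      _ ≤ (v 0 + c) * Real.exp (2 * δ * t) :=
          mul_le_mul_of_nonneg_right hnn (Real.exp_pos _).le
  -- Step 2: integrate u' ≤ δ (u+v)
  set C : ℝ := v 0 / 2 + κ / (4 * δ) with hC
  have hC2 : 2 * δ * C = δ * (v 0 + c) := by field_simp [hC, hc]; ring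
  have step2 : u T ≤ C * Real.exp (2 * δ * T) - C - κ * T / 2 := by
    have key := aux_antitone hT
      (fun t => u t - C * Real.exp (2 * δ * t) + κ * t / 2)
      (fun t => u' t - C * (Real.exp (2 * δ * t) * (2 * δ)) + κ / 2)
      (by
        intro t ht
        have hD : HasDerivAt (fun t => Real.exp (2 * δ * t))
            (Real.exp (2 * δ * t) * (2 * δ)) t := by
          have := ((hasDerivAt_id t).const_mul (2 * δ)).exp
          simpa [mul_comm] using this
        have h1 : HasDerivAt (fun t => κ * t / 2) (κ / 2) t := by
          have := (hasDerivAt_id t).const_mul κ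
          simpa [mul_comm, mul_div_assoc] using this.div_const 2
        exact ((hu t ht).sub (hD.const_mul C)).add h1)
      (by
        intro t ht
        have h1 := hu' t ht
        have h2 := step1 t ht
        have hδc : δ * c = κ / 2 := by rw [hc]; field_simp
        have : u' t ≤ δ * ((v 0 + c) * Real.exp (2 * δ * t)) - δ * c := by
          nlinarith
        have h3 : δ * ((v 0 + c) * Real.exp (2 * δ * t))
            = C * (Real.exp (2 * δ * t) * (2 * δ)) := by
          linear_combination Real.exp (2 * δ * t) * hC2
        rw [h3, hδc] at this
        show u' t - C * (Real.exp (2 * δ * t) * (2 * δ)) + κ / 2 ≤ 0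
        linarith [this])
    have h := key T (Set.right_mem_Icc.2 hT.le)
    simp only [mul_zero, Real.exp_zero, mul_one, hu0, zero_sub, mul_zero, zero_div,
      add_zero] at h
    linarith
  have hfinal : C * Real.exp (2 * δ * T) - C - κ * T / 2
      = (Real.exp (2 * δ * T) - 1) / 2 * v 0
        + κ * (Real.exp (2 * δ * T) - 2 * δ * T - 1) / (4 * δ) := by
    rw [hC]; field_simp; ring
  linarith [step2, hfinal.le]
end
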